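/- arXiv:1903.08488 — 6 statements merged into one kernel-verified Lean document; each statement's English description precedes it below -/
import Mathlib

section
/- Let N ≥ 1 and let {e_1, …, e_{2N}} be the canonical orthonormal basis of the Euclidean space ℝ^{2N}. Then the Kolmogorov N-width of the set {e_1, …, e_{2N}} equals 1/√2, i.e., inf over all N-dimensional linear subspaces V ⊆ ℝ^{2N} of max_{1 ≤ k ≤ 2N} inf_{v ∈ V} ‖e_k − v‖₂ = 1/√2. -/
noncomputable section
open Metric Module RealInnerProductSpace

lemma sum_proj_sq (n : ℕ) (V : Submodule ℝ (EuclideanSpace ℝ (Fin n))) :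
    ∑ k : Fin n, ‖(Submodule.orthogonalProjection V (EuclideanSpace.single k (1:ℝ)) : V)‖ ^ 2
      = (finrank ℝ V : ℝ) := by
  classical
  set E := EuclideanSpace ℝ (Fin n) with hE
  let f := stdOrthonormalBasis ℝ V
  have key : ∀ x : E, ‖(Submodule.orthogonalProjection V x : V)‖ ^ 2
      = ∑ j, ⟪(f j : E), x⟫ * ⟪(f j : E), x⟫ := by
    intro x
    rw [← real_inner_self_eq_norm_sq, ← OrthonormalBasis.sum_inner_mul_inner f]
    refine Finset.sum_congr rfl fun j _ => ?_
    rw [Submodule.inner_orthogonalProjection_eq_of_mem_right, Submodule.inner_orthogonalProjection_eq_of_mem_left,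
      real_inner_comm]
  calc ∑ k : Fin n, ‖(Submodule.orthogonalProjection V (EuclideanSpace.single k (1:ℝ)) : V)‖ ^ 2
      = ∑ k : Fin n, ∑ j, ⟪(f j : E), EuclideanSpace.single k (1:ℝ)⟫
          * ⟪(f j : E), EuclideanSpace.single k (1:ℝ)⟫ := by
        exact Finset.sum_congr rfl fun k _ => key _
    _ = ∑ j, ∑ k : Fin n, ⟪(f j : E), EuclideanSpace.single k (1:ℝ)⟫
          * ⟪EuclideanSpace.single k (1:ℝ), (f j : E)⟫ := by
        rw [Finset.sum_comm]
        exact Finset.sum_congr rfl fun j _ => Finset.sum_congr rfl fun k _ => by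
          rw [real_inner_comm (EuclideanSpace.single k (1:ℝ))]
    _ = ∑ j : Fin (finrank ℝ V), (1:ℝ) := by
        refine Finset.sum_congr rfl fun j _ => ?_
        have h := (EuclideanSpace.basisFun (Fin n) ℝ).sum_inner_mul_inner (f j : E) (f j : E)
        simp only [EuclideanSpace.basisFun_apply] at h
        rw [h, real_inner_self_eq_norm_sq]
        have : ‖(f j : E)‖ = 1 := f.orthonormal.1 j
        rw [this]; norm_num
    _ = (finrank ℝ V : ℝ) := by simp

lemma lower_bound (N : ℕ) (hN : 1 ≤ N) (V : Submodule ℝ (EuclideanSpace ℝ (Fin (2*N))))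
    (hV : finrank ℝ V = N) :
    1 / Real.sqrt 2 ≤ ⨆ k : Fin (2*N),
      infDist (EuclideanSpace.single k (1:ℝ)) (V : Set (EuclideanSpace ℝ (Fin (2*N)))) := by
  set E := EuclideanSpace ℝ (Fin (2*N)) with hE
  have hsum : ∑ k : Fin (2*N), ‖(Submodule.orthogonalProjection V (EuclideanSpace.single k (1:ℝ)) : V)‖ ^ 2
      = (N : ℝ) := by rw [sum_proj_sq, hV]
  have hne : (Finset.univ : Finset (Fin (2*N))).Nonempty := ⟨⟨0, by omega⟩, Finset.mem_univ _⟩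
  obtain ⟨k, -, hk⟩ := Finset.exists_le_of_sum_le hne (f := fun k : Fin (2*N) =>
      ‖(Submodule.orthogonalProjection V (EuclideanSpace.single k (1:ℝ)) : V)‖ ^ 2)
      (g := fun _ => (1/2 : ℝ)) (by
        rw [hsum, Finset.sum_const, Finset.card_univ, Fintype.card_fin, nsmul_eq_mul]
        push_cast
        linarith)
  set x : E := EuclideanSpace.single k (1:ℝ) with hx
  have hnx : ‖x‖ = 1 := by rw [hx, EuclideanSpace.norm_single]; norm_num
  have hpyth := Submodule.norm_sq_eq_add_norm_sq_projection x V
  have hres : ‖x - Submodule.orthogonalProjection V x‖ ^ 2 = ‖(Submodule.orthogonalProjection Vᗮ x : V ᗮ)‖ ^ 2 := by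
    have h := Submodule.starProjection_add_starProjection_orthogonal (K := V) x
    have : x - (Submodule.orthogonalProjection V x : E) = (Submodule.orthogonalProjection Vᗮ x : E) :=
      sub_eq_iff_eq_add'.mpr h.symm
    rw [this, Submodule.norm_coe]
  have hge : (1/2 : ℝ) ≤ ‖x - Submodule.orthogonalProjection V x‖ ^ 2 := by
    rw [hres]
    nlinarith [hpyth, hnx, hk]
  have hdist : infDist x (V : Set E) = ‖x - Submodule.orthogonalProjection V x‖ := by
    rw [show ‖x - (Submodule.orthogonalProjection V x : E)‖ = ⨅ y : V, ‖x - y‖ from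
      Submodule.starProjection_minimal x, infDist_eq_iInf]
    exact iInf_congr fun y => dist_eq_norm _ _
  have hle : 1 / Real.sqrt 2 ≤ infDist x (V : Set E) := by
    rw [hdist]
    have h1 : 1 / Real.sqrt 2 = Real.sqrt (1/2) := by
      rw [one_div, one_div, ← Real.sqrt_inv]
    rw [h1]
    calc Real.sqrt (1/2) ≤ Real.sqrt (‖x - Submodule.orthogonalProjection V x‖ ^ 2) :=
          Real.sqrt_le_sqrt hge
      _ = ‖x - Submodule.orthogonalProjection V x‖ := Real.sqrt_sq (norm_nonneg _)
  exact hle.trans (le_ciSup (f := fun k : Fin (2*N) =>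
    infDist (EuclideanSpace.single k (1:ℝ)) (V : Set E))
    (Set.Finite.bddAbove (Set.finite_range _)) k)

lemma inner_single_single {ι : Type*} [Fintype ι] [DecidableEq ι] (p q : ι) :
    ⟪EuclideanSpace.single p (1:ℝ), EuclideanSpace.single q (1:ℝ)⟫
      = if p = q then 1 else 0 := by
  rw [EuclideanSpace.inner_single_left]
  simp [EuclideanSpace.single_apply, eq_comm]

lemma upper_bound (N : ℕ) (hN : 1 ≤ N) :
    ∃ V : Submodule ℝ (EuclideanSpace ℝ (Fin (2*N))), finrank ℝ V = N ∧
      ∀ k : Fin (2*N), infDist (EuclideanSpace.single k (1:ℝ))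
        (V : Set (EuclideanSpace ℝ (Fin (2*N)))) ≤ 1 / Real.sqrt 2 := by
  have h2 : ∀ i : Fin N, 2 * i.val < 2 * N := fun i => by omega
  have h2' : ∀ i : Fin N, 2 * i.val + 1 < 2 * N := fun i => by have := i.isLt; omega
  set a : Fin N → Fin (2*N) := fun i => ⟨2 * i.val, h2 i⟩ with ha
  set b : Fin N → Fin (2*N) := fun i => ⟨2 * i.val + 1, h2' i⟩ with hb
  have haval : ∀ i, (a i).val = 2 * i.val := fun _ => rfl
  have hbval : ∀ i, (b i).val = 2 * i.val + 1 := fun _ => rfl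
  set u : Fin N → EuclideanSpace ℝ (Fin (2*N)) := fun i =>
    EuclideanSpace.single (a i) (1:ℝ) + EuclideanSpace.single (b i) (1:ℝ) with hu
  have hne : ∀ i j : Fin N, i.val ≠ j.val → (a i ≠ a j ∧ a i ≠ b j ∧ b i ≠ a j ∧ b i ≠ b j) := by
    intro i j hij
    refine ⟨?_, ?_, ?_, ?_⟩ <;>
      (intro hc; have := congrArg Fin.val hc;
        simp only [haval, hbval] at this; omega)
  have hab : ∀ i j : Fin N, a i ≠ b j := by
    intro i j hc; have := congrArg Fin.val hc; simp only [haval, hbval] at this; omega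
  have huu : ∀ i j : Fin N, ⟪u i, u j⟫ = if i = j then 2 else 0 := by
    intro i j
    simp only [hu, inner_add_left, inner_add_right, inner_single_single]
    rcases eq_or_ne i j with h | h
    · subst h
      rw [if_pos rfl, if_pos rfl, if_pos rfl, if_neg (hab i i), if_neg (Ne.symm (hab i i))]
      norm_num
    · obtain ⟨h1, h2, h3, h4⟩ := hne i j (fun hc => h (Fin.ext hc))
      rw [if_neg h, if_neg h1, if_neg h2, if_neg h3, if_neg h4]
      norm_num
  have hs2 : Real.sqrt 2 ≠ 0 := by positivity
  have hhalf : (Real.sqrt 2)⁻¹ * (Real.sqrt 2)⁻¹ = 1/2 := by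
    rw [← mul_inv, Real.mul_self_sqrt (by norm_num)]
    norm_num
  set v : Fin N → EuclideanSpace ℝ (Fin (2*N)) := fun i => (Real.sqrt 2)⁻¹ • u i with hv
  have hvon : Orthonormal ℝ v := by
    rw [orthonormal_iff_ite]
    intro i j
    simp only [hv, real_inner_smul_left, real_inner_smul_right, huu, ← mul_assoc, hhalf]
    rcases eq_or_ne i j with h | h
    · rw [if_pos h, if_pos h]; norm_num
    · rw [if_neg h, if_neg h]; ring
  refine ⟨Submodule.span ℝ (Set.range v), ?_, ?_⟩
  · rw [finrank_span_eq_card hvon.linearIndependent, Fintype.card_fin]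
  · intro k
    have hk2 : k.val / 2 < N := by omega
    set i : Fin N := ⟨k.val / 2, hk2⟩ with hi
    have hiv : (i : ℕ) = k.val / 2 := by rw [hi]
    set w : EuclideanSpace ℝ (Fin (2*N)) := (1/2 : ℝ) • u i with hw
    have hwmem : w ∈ Submodule.span ℝ (Set.range v) := by
      have : w = ((1/2) * Real.sqrt 2) • v i := by
        rw [hw, hv, smul_smul, mul_assoc, mul_inv_cancel₀ hs2, mul_one]
      rw [this]
      exact Submodule.smul_mem _ _ (Submodule.subset_span (Set.mem_range_self i))
    have hkab : k = a i ∨ k = b i := by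
      rcases Nat.even_or_odd k.val with h | h <;>
        [rw [Nat.even_iff] at h; rw [Nat.odd_iff] at h]
      · left; apply Fin.ext; simp only [haval, hbval, Fin.val_mk]; omega
      · right; apply Fin.ext; simp only [haval, hbval, Fin.val_mk]; omega
    have hinner : ⟪EuclideanSpace.single k (1:ℝ), u i⟫ = 1 := by
      rw [hu]
      simp only [inner_add_right, inner_single_single]
      rcases hkab with h | h
      · rw [if_pos h, if_neg (by
          intro hc; have h1 := congrArg Fin.val h; have h2 := congrArg Fin.val hc
          rw [haval] at h1; rw [hbval] at h2; omega)]
        norm_num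
      · rw [if_neg (by
          intro hc; have h1 := congrArg Fin.val h; have h2 := congrArg Fin.val hc
          rw [hbval] at h1; rw [haval] at h2; omega), if_pos h]
        norm_num
    have hnormw : ‖w‖ ^ 2 = 1/2 := by
      rw [← real_inner_self_eq_norm_sq, hw, real_inner_smul_left, real_inner_smul_right,
        huu, if_pos rfl]
      norm_num
    have hnsq : ‖EuclideanSpace.single k (1:ℝ) - w‖ ^ 2 = 1/2 := by
      rw [norm_sub_sq_real, EuclideanSpace.norm_single, hnormw, hw, real_inner_smul_right,
        hinner]
      norm_num
    have hn : ‖EuclideanSpace.single k (1:ℝ) - w‖ = 1 / Real.sqrt 2 := by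
      have h1 : 1 / Real.sqrt 2 = Real.sqrt (1/2) := by
        rw [one_div, one_div, ← Real.sqrt_inv]
      rw [h1, ← hnsq, Real.sqrt_sq (norm_nonneg _)]
    calc infDist (EuclideanSpace.single k (1:ℝ)) _ ≤ dist (EuclideanSpace.single k (1:ℝ)) w :=
          infDist_le_dist_of_mem hwmem
      _ = 1 / Real.sqrt 2 := by rw [dist_eq_norm, hn]

/-- The Kolmogorov N-width of the canonical orthonormal basis
{e_1, …, e_{2N}} of Euclidean ℝ^{2N} equals 1/√2. -/
theorem kolmogorov_nwidth_canonical_basis (N : ℕ) (hN : 1 ≤ N) :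
    (⨅ V : {V : Submodule ℝ (EuclideanSpace ℝ (Fin (2 * N))) // finrank ℝ V = N},
      ⨆ k : Fin (2 * N),
        infDist (EuclideanSpace.single k (1:ℝ)) (V.1 : Set (EuclideanSpace ℝ (Fin (2 * N)))))
    = 1 / Real.sqrt 2 := by
  obtain ⟨V₀, hV₀, hV₀b⟩ := upper_bound N hN
  haveI hne : Nonempty {V : Submodule ℝ (EuclideanSpace ℝ (Fin (2 * N))) // finrank ℝ V = N} :=
    ⟨⟨V₀, hV₀⟩⟩
  haveI : Nonempty (Fin (2 * N)) := ⟨⟨0, by omega⟩⟩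
  have hbdd : BddBelow (Set.range fun
      V : {V : Submodule ℝ (EuclideanSpace ℝ (Fin (2 * N))) // finrank ℝ V = N} =>
      ⨆ k : Fin (2 * N),
        infDist (EuclideanSpace.single k (1:ℝ))
          (V.1 : Set (EuclideanSpace ℝ (Fin (2 * N))))) := by
    refine ⟨0, ?_⟩
    rintro x ⟨V, rfl⟩
    exact le_trans infDist_nonneg
      (le_ciSup (f := fun k : Fin (2 * N) => infDist (EuclideanSpace.single k (1:ℝ))
          (V.1 : Set (EuclideanSpace ℝ (Fin (2 * N)))))
        (Set.Finite.bddAbove (Set.finite_range _)) (Classical.arbitrary _))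
  apply le_antisymm
  · exact le_trans (ciInf_le hbdd ⟨V₀, hV₀⟩) (ciSup_le hV₀b)
  · exact le_ciInf fun V => lower_bound N hN V.1 V.2
end
end

section
/- Let N ≥ 1. For every N-dimensional linear subspace V of the Euclidean space ℝ^{2N} there exists an index k* ∈ {1, …, 2N} such that the distance from the canonical basis vector e_{k*} to V satisfies inf_{v ∈ V} ‖e_{k*} − v‖₂ ≥ 1/√2. -/
noncomputable section
open Metric Module

/-- For every N-dimensional subspace V of Euclidean ℝ^{2N} there is a
canonical basis vector e_{k*} whose distance to V is at least 1/√2. -/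
theorem exists_basis_vector_far_from_subspace (N : ℕ) (hN : 1 ≤ N)
    (V : Submodule ℝ (EuclideanSpace ℝ (Fin (2 * N)))) (hV : finrank ℝ V = N) :
    ∃ k : Fin (2 * N),
      1 / Real.sqrt 2 ≤
        infDist (EuclideanSpace.single k (1:ℝ)) (V : Set (EuclideanSpace ℝ (Fin (2 * N)))) := by
  classical
  set E := EuclideanSpace ℝ (Fin (2 * N)) with hE
  set W : Submodule ℝ (EuclideanSpace ℝ (Fin (2 * N))) := Vᗮ with hWdef
  have hW : finrank ℝ W = N := by
    have h := Submodule.finrank_add_finrank_orthogonal V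
    rw [hV, finrank_euclideanSpace_fin] at h
    rw [hWdef]
    omega
  set b := stdOrthonormalBasis ℝ W with hb
  set e : Fin (2 * N) → E := fun k => EuclideanSpace.single k (1:ℝ) with he
  set P := W.orthogonalProjectionOnto with hP
  -- norm of projection in terms of the orthonormal basis of W
  have hPnorm : ∀ x : E, ‖(P x : E)‖ ^ 2 = ∑ i, (inner ℝ ((b i : E)) x : ℝ) ^ 2 := by
    intro x
    have h1 : ‖(P x : E)‖ = ‖b.repr (P x)‖ := by
      rw [b.repr.norm_map]; rfl
    rw [h1, EuclideanSpace.norm_eq, Real.sq_sqrt (by positivity)]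
    refine Finset.sum_congr rfl fun i _ => ?_
    rw [b.repr_apply_apply]
    rw [Submodule.inner_orthogonalProjection_eq_of_mem_left]
    rw [Real.norm_eq_abs, sq_abs]
  -- sum over k of the squared projections equals N
  have hsum : ∑ k, ‖(P (e k) : E)‖ ^ 2 = (N : ℝ) := by
    simp_rw [hPnorm]
    rw [Finset.sum_comm]
    have hone : ∀ i, ∑ k : Fin (2 * N), (inner ℝ ((b i : E)) (e k) : ℝ) ^ 2 = 1 := by
      intro i
      have hbi : ‖(b i : E)‖ = 1 := by
        have := b.orthonormal.1 i
        rwa [Submodule.norm_coe]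
      have : ∀ k : Fin (2 * N), (inner ℝ ((b i : E)) (e k) : ℝ) = (b i : E) k := by
        intro k
        rw [he]
        simp [EuclideanSpace.inner_single_right, conj_trivial]
      simp_rw [this]
      have h2 : ‖(b i : E)‖ ^ 2 = ∑ k, ‖(b i : E) k‖ ^ 2 := by
        rw [EuclideanSpace.norm_eq, Real.sq_sqrt (by positivity)]
      rw [hbi] at h2
      simp only [Real.norm_eq_abs, sq_abs] at h2
      rw [← h2]; norm_num
    simp_rw [hone]
    simp [hW]
  -- there exists k with large projection
  have hex : ∃ k : Fin (2 * N), (1 / 2 : ℝ) ≤ ‖(P (e k) : E)‖ ^ 2 := by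
    by_contra hcon
    push_neg at hcon
    have hlt : ∑ k : Fin (2 * N), ‖(P (e k) : E)‖ ^ 2
        < ∑ _k : Fin (2 * N), (1 / 2 : ℝ) := by
      refine Finset.sum_lt_sum_of_nonempty ?_ fun k _ => hcon k
      simp [Finset.univ_nonempty_iff]
      exact Fin.pos_iff_nonempty.mp (by omega)
    rw [hsum, Finset.sum_const, Finset.card_univ, Fintype.card_fin] at hlt
    have : (N : ℝ) < N := by
      calc (N : ℝ) < (2 * N : ℕ) • (1 / 2 : ℝ) := hlt
        _ = N := by push_cast [nsmul_eq_mul]; ring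
    exact lt_irrefl _ this
  obtain ⟨k, hk⟩ := hex
  refine ⟨k, ?_⟩
  -- now show the infDist bound
  have hVne : (V : Set E).Nonempty := ⟨0, V.zero_mem⟩
  by_contra hcon
  push_neg at hcon
  rw [infDist_lt_iff hVne] at hcon
  obtain ⟨v, hv, hdist⟩ := hcon
  have hkey : 1 / Real.sqrt 2 ≤ dist (e k) v := by
    have hv' : v ∈ Wᗮ := by
      rw [hWdef]
      exact V.le_orthogonal_orthogonal hv
    have hPv : P v = 0 :=
      Submodule.orthogonalProjectionOnto_apply_of_mem_orthogonal hv'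
    have h1 : ‖(P (e k) : E)‖ ≤ ‖e k - v‖ := by
      have hsub : (P (e k) : E) = (P (e k - v) : E) := by
        rw [map_sub, hPv, sub_zero]
      rw [hsub]
      calc ‖(P (e k - v) : E)‖ = ‖P (e k - v)‖ := rfl
        _ ≤ ‖P‖ * ‖e k - v‖ := P.le_opNorm _
        _ ≤ 1 * ‖e k - v‖ :=
            mul_le_mul_of_nonneg_right (Submodule.orthogonalProjection_norm_le W) (norm_nonneg _)
        _ = ‖e k - v‖ := one_mul _
    have h2 : 1 / Real.sqrt 2 ≤ ‖(P (e k) : E)‖ := by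
      have h3 := Real.sqrt_le_sqrt hk
      rw [Real.sqrt_sq (norm_nonneg _)] at h3
      calc 1 / Real.sqrt 2 = Real.sqrt (1 / 2) := by
            rw [one_div, one_div, Real.sqrt_inv]
        _ ≤ ‖(P (e k) : E)‖ := h3
    rw [dist_eq_norm]
    exact h2.trans h1
  exact absurd hdist (not_lt.mpr hkey)
end
end

section
/- Let k ≥ 1 and N ≥ 1 be integers, and let {e_1, …, e_{kN}} be the canonical orthonormal basis of the Euclidean space ℝ^{kN}. Then the Kolmogorov N-width of the set {e_1, …, e_{kN}} equals √((k−1)/k), i.e., inf over all N-dimensional linear subspaces V ⊆ ℝ^{kN} of max_{1 ≤ j ≤ kN} inf_{v ∈ V} ‖e_j − v‖₂ = √((k−1)/k). -/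
noncomputable section
open Metric Module
open scoped RealInnerProductSpace

private lemma upper_aux (k N : ℕ) (hk : 1 ≤ k) (hN : 1 ≤ N) :
    ∃ V : Submodule ℝ (EuclideanSpace ℝ (Fin (k * N))), finrank ℝ V = N ∧
      ∀ j : Fin (k * N), infDist (EuclideanSpace.single j (1:ℝ))
        (V : Set (EuclideanSpace ℝ (Fin (k * N)))) ≤ Real.sqrt (((k : ℝ) - 1) / k) := by
  classical
  have hk0 : (0:ℝ) < k := by exact_mod_cast hk
  have hkne : (k:ℝ) ≠ 0 := ne_of_gt hk0
  have hsq : Real.sqrt k * Real.sqrt k = k := Real.mul_self_sqrt hk0.le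
  have hsne : (Real.sqrt k) ≠ 0 := by positivity
  set c : ℝ := (Real.sqrt k)⁻¹ with hc
  set bl : Fin (k * N) → Fin N := fun j => (finProdFinEquiv.symm j).2 with hbl
  set u : Fin N → EuclideanSpace ℝ (Fin (k * N)) :=
    fun i => WithLp.toLp 2 (fun j => if bl j = i then c else 0) with hu
  have hcc : c * c = (k:ℝ)⁻¹ := by
    rw [hc, ← mul_inv, hsq]
  -- inner products
  have hinner : ∀ i i' : Fin N, ⟪u i, u i'⟫ = if i = i' then 1 else 0 := by
    intro i i'
    rw [PiLp.inner_apply]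
    by_cases h : i = i'
    · subst h
      have : ∀ j, (inner ℝ (u i j) (u i j) : ℝ) = if bl j = i then (k:ℝ)⁻¹ else 0 := by
        intro j
        simp only [hu, WithLp.ofLp_toLp, RCLike.inner_apply, starRingEnd_apply, star_trivial]
        by_cases hbj : bl j = i <;> simp [hbj, hcc]
      rw [Finset.sum_congr rfl fun j _ => this j]
      rw [← Equiv.sum_comp (finProdFinEquiv : Fin k × Fin N ≃ Fin (k * N))]
      have hbe : ∀ p : Fin k × Fin N, bl (finProdFinEquiv p) = p.2 := by
        intro p; simp only [hbl, Equiv.symm_apply_apply]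
      simp_rw [hbe]
      rw [Fintype.sum_prod_type]
      simp [Finset.sum_ite_eq', hkne]
    · simp only [if_neg h]
      apply Finset.sum_eq_zero
      intro j _
      simp only [hu, WithLp.ofLp_toLp, RCLike.inner_apply, starRingEnd_apply, star_trivial]
      by_cases hbj : bl j = i
      · have : ¬ (bl j = i') := by rw [hbj]; exact h
        simp [this]
      · simp [hbj]
  have hon : Orthonormal ℝ u := by
    rw [orthonormal_iff_ite]
    intro i j
    rw [hinner]
  refine ⟨Submodule.span ℝ (Set.range u), ?_, ?_⟩
  · rw [finrank_span_eq_card hon.linearIndependent, Fintype.card_fin]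
  · intro j
    set v : EuclideanSpace ℝ (Fin (k * N)) := c • u (bl j) with hv
    have hvmem : v ∈ Submodule.span ℝ (Set.range u) :=
      Submodule.smul_mem _ _ (Submodule.subset_span ⟨bl j, rfl⟩)
    have hle : infDist (EuclideanSpace.single j (1:ℝ))
        ((Submodule.span ℝ (Set.range u)) : Set (EuclideanSpace ℝ (Fin (k * N))))
        ≤ dist (EuclideanSpace.single j (1:ℝ)) v := infDist_le_dist_of_mem hvmem
    have hnorm : dist (EuclideanSpace.single j (1:ℝ)) v = Real.sqrt (((k:ℝ) - 1) / k) := by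
      rw [dist_eq_norm]
      have h1 : ‖EuclideanSpace.single j (1:ℝ)‖ = 1 := by
        rw [EuclideanSpace.norm_single]; norm_num
      have h2 : ⟪EuclideanSpace.single j (1:ℝ), v⟫ = (k:ℝ)⁻¹ := by
        rw [EuclideanSpace.inner_single_left]
        simp only [map_one, one_mul, hv]
        have : v j = c * c := by
          simp [hv, hu, PiLp.smul_apply, smul_eq_mul]
        rw [hv] at this
        rw [this, hcc]
      have h3 : ‖v‖ ^ 2 = (k:ℝ)⁻¹ := by
        rw [hv, norm_smul]
        have : ‖u (bl j)‖ = 1 := hon.1 (bl j)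
        rw [this, mul_one]
        simp only [Real.norm_eq_abs, sq_abs]
        rw [sq, hcc]
      have hsq2 : ‖EuclideanSpace.single j (1:ℝ) - v‖ ^ 2 = ((k:ℝ) - 1) / k := by
        rw [norm_sub_sq_real, h1, h2, h3]
        field_simp
        ring
      rw [← hsq2, Real.sqrt_sq (norm_nonneg _)]
    rw [← hnorm]; exact hle


private lemma lower_aux (k N : ℕ) (hk : 1 ≤ k) (hN : 1 ≤ N)
    (V : Submodule ℝ (EuclideanSpace ℝ (Fin (k * N)))) (hV : finrank ℝ V = N) :
    ∃ j : Fin (k * N), Real.sqrt (((k : ℝ) - 1) / k) ≤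
      infDist (EuclideanSpace.single j (1:ℝ))
        (V : Set (EuclideanSpace ℝ (Fin (k * N)))) := by
  classical
  have hk0 : (0:ℝ) < k := by exact_mod_cast hk
  have hkne : (k:ℝ) ≠ 0 := ne_of_gt hk0
  have hn0 : 0 < k * N := Nat.mul_pos hk hN
  set b : OrthonormalBasis (Fin N) ℝ V := (stdOrthonormalBasis ℝ V).reindex (finCongr hV) with hb
  set e : Fin (k * N) → (EuclideanSpace ℝ (Fin (k * N))) := fun j => EuclideanSpace.single j (1:ℝ) with he
  -- squared norm in EuclideanSpace
  have hnormsq : ∀ (ι : Type) [Fintype ι] (y : EuclideanSpace ℝ ι), ‖y‖ ^ 2 = ∑ i, (y i) ^ 2 := by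
    intro ι _ y
    rw [← real_inner_self_eq_norm_sq, PiLp.inner_apply]
    congr 1; ext i
    simp [RCLike.inner_apply, sq]
  -- Pythagoras
  have hPyth : ∀ x : (EuclideanSpace ℝ (Fin (k * N))), ‖x‖ ^ 2
      = ‖(V.orthogonalProjectionOnto x : (EuclideanSpace ℝ (Fin (k * N))))‖ ^ 2 + ‖x - V.orthogonalProjectionOnto x‖ ^ 2 := by
    intro x
    have horth : ⟪(V.orthogonalProjectionOnto x : (EuclideanSpace ℝ (Fin (k * N)))), x - V.orthogonalProjectionOnto x⟫ = 0 :=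
      Submodule.inner_right_of_mem_orthogonal (Submodule.coe_mem _)
        (Submodule.sub_starProjection_mem_orthogonal (K := V) x)
    have hdecomp : x = ↑(V.orthogonalProjectionOnto x) + (x - ↑(V.orthogonalProjectionOnto x)) := by
      abel
    calc ‖x‖ ^ 2 = ‖↑(V.orthogonalProjectionOnto x) + (x - ↑(V.orthogonalProjectionOnto x))‖ ^ 2 := by
          rw [← hdecomp]
      _ = _ := by
          rw [sq, sq, sq]
          exact norm_add_sq_eq_norm_sq_add_norm_sq_of_inner_eq_zero _ _ horth
  -- projection norm via Parseval in V
  have hproj : ∀ x : (EuclideanSpace ℝ (Fin (k * N))), ‖(V.orthogonalProjectionOnto x : (EuclideanSpace ℝ (Fin (k * N))))‖ ^ 2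
      = ∑ i : Fin N, ⟪(b i : (EuclideanSpace ℝ (Fin (k * N)))), x⟫ ^ 2 := by
    intro x
    have h1 : ‖(V.orthogonalProjectionOnto x : (EuclideanSpace ℝ (Fin (k * N))))‖ = ‖V.orthogonalProjectionOnto x‖ :=
      (Submodule.coe_norm _).symm
    rw [h1, ← b.repr.norm_map (V.orthogonalProjectionOnto x),
      hnormsq (Fin N) (b.repr (V.orthogonalProjectionOnto x))]
    congr 1; ext i
    rw [b.repr_apply_apply]
    rw [Submodule.inner_orthogonalProjectionOnto_eq_of_mem_left]
  -- sum over j of inner products squared equals 1 for each i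
  have hParseval : ∀ i : Fin N, ∑ j : Fin (k * N), ⟪(b i : (EuclideanSpace ℝ (Fin (k * N)))), e j⟫ ^ 2 = 1 := by
    intro i
    have hval : ∀ j, ⟪(b i : (EuclideanSpace ℝ (Fin (k * N)))), e j⟫ = (b i : (EuclideanSpace ℝ (Fin (k * N)))) j := by
      intro j
      rw [real_inner_comm, he]
      simp only [EuclideanSpace.inner_single_left, map_one, one_mul]
    simp_rw [hval]
    rw [← hnormsq (Fin (k * N)) (b i : (EuclideanSpace ℝ (Fin (k * N))))]
    have : ‖(b i : (EuclideanSpace ℝ (Fin (k * N))))‖ = 1 := by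
      rw [← Submodule.coe_norm]
      exact b.orthonormal.1 i
    rw [this]; norm_num
  -- total sum
  have hsum : ∑ j : Fin (k * N), ‖e j - V.orthogonalProjectionOnto (e j)‖ ^ 2
      = (k : ℝ) * N - N := by
    have h1 : ∀ j, ‖e j - V.orthogonalProjectionOnto (e j)‖ ^ 2
        = 1 - ∑ i : Fin N, ⟪(b i : (EuclideanSpace ℝ (Fin (k * N)))), e j⟫ ^ 2 := by
      intro j
      have h2 := hPyth (e j)
      rw [hproj (e j)] at h2
      have h3 : ‖e j‖ = 1 := by
        rw [he]; simp [EuclideanSpace.norm_single]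
      rw [h3] at h2
      linarith
    simp_rw [h1]
    rw [Finset.sum_sub_distrib, Finset.sum_const, Finset.card_univ, Fintype.card_fin,
      Finset.sum_comm]
    simp_rw [hParseval]
    rw [Finset.sum_const, Finset.card_univ, Fintype.card_fin]
    push_cast
    ring
  -- pigeonhole
  have hpig : ∃ j : Fin (k * N), ((k:ℝ) - 1) / k ≤ ‖e j - V.orthogonalProjectionOnto (e j)‖ ^ 2 := by
    have hne : (Finset.univ : Finset (Fin (k * N))).Nonempty := by
      rw [Finset.univ_nonempty_iff]
      exact ⟨⟨0, hn0⟩⟩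
    have hle : ∑ _j : Fin (k * N), ((k:ℝ) - 1) / k
        ≤ ∑ j : Fin (k * N), ‖e j - V.orthogonalProjectionOnto (e j)‖ ^ 2 := by
      rw [hsum, Finset.sum_const, Finset.card_univ, Fintype.card_fin]
      rw [nsmul_eq_mul]
      push_cast
      have heq : (k:ℝ) * N * (((k:ℝ) - 1) / k) = (k:ℝ) * N - N := by
        field_simp
      rw [heq]
    obtain ⟨j, _, hj⟩ := Finset.exists_le_of_sum_le hne hle
    exact ⟨j, hj⟩
  obtain ⟨j, hj⟩ := hpig
  refine ⟨j, ?_⟩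
  have hinf : infDist (e j) (V : Set (EuclideanSpace ℝ (Fin (k * N)))) = ‖e j - V.orthogonalProjectionOnto (e j)‖ := by
    rw [infDist_eq_iInf, ← Submodule.starProjection_apply, Submodule.starProjection_minimal]
    simp_rw [dist_eq_norm]
    rfl
  show Real.sqrt (((k : ℝ) - 1) / k) ≤ infDist (e j) (V : Set (EuclideanSpace ℝ (Fin (k * N))))
  rw [hinf]
  calc Real.sqrt (((k:ℝ) - 1) / k)
      ≤ Real.sqrt (‖e j - V.orthogonalProjectionOnto (e j)‖ ^ 2) := Real.sqrt_le_sqrt hj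
    _ = _ := Real.sqrt_sq (norm_nonneg _)

/-- For integers k, N ≥ 1, the Kolmogorov N-width of the canonical
orthonormal basis {e_1, …, e_{kN}} of Euclidean ℝ^{kN} equals √((k−1)/k). -/
theorem kolmogorov_nwidth_canonical_basis_general (k N : ℕ) (hk : 1 ≤ k) (hN : 1 ≤ N) :
    (⨅ V : {V : Submodule ℝ (EuclideanSpace ℝ (Fin (k * N))) // finrank ℝ V = N},
      ⨆ j : Fin (k * N),
        infDist (EuclideanSpace.single j (1:ℝ)) (V.1 : Set (EuclideanSpace ℝ (Fin (k * N)))))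
    = Real.sqrt (((k : ℝ) - 1) / k) := by
  have hn0 : 0 < k * N := Nat.mul_pos hk hN
  haveI : Nonempty (Fin (k * N)) := ⟨⟨0, hn0⟩⟩
  obtain ⟨V₀, hV₀, hub⟩ := upper_aux k N hk hN
  have hbdd : BddBelow (Set.range fun
      V : {V : Submodule ℝ (EuclideanSpace ℝ (Fin (k * N))) // finrank ℝ V = N} =>
      ⨆ j : Fin (k * N), infDist (EuclideanSpace.single j (1:ℝ))
        (V.1 : Set (EuclideanSpace ℝ (Fin (k * N))))) :=
    ⟨0, by rintro x ⟨V, rfl⟩; exact Real.iSup_nonneg fun j => infDist_nonneg⟩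
  haveI : Nonempty {V : Submodule ℝ (EuclideanSpace ℝ (Fin (k * N))) // finrank ℝ V = N} :=
    ⟨⟨V₀, hV₀⟩⟩
  apply le_antisymm
  · exact ciInf_le_of_le hbdd ⟨V₀, hV₀⟩ (ciSup_le fun j => hub j)
  · refine le_ciInf fun V => ?_
    obtain ⟨j, hj⟩ := lower_aux k N hk hN V.1 V.2
    refine hj.trans (le_ciSup (f := fun j : Fin (k * N) =>
      infDist (EuclideanSpace.single j (1:ℝ))
        (V.1 : Set (EuclideanSpace ℝ (Fin (k * N))))) ?_ j)
    exact Set.Finite.bddAbove (Set.finite_range _)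
end
end

section
/- Let H be a real Hilbert space, N ≥ 1, and let ψ̃_1, …, ψ̃_{2N} ∈ H be an orthonormal family of 2N vectors. Then the Kolmogorov N-width of the set {ψ̃_1, …, ψ̃_{2N}} equals 1/√2, i.e., inf over all N-dimensional linear subspaces V ⊆ H of max_{1 ≤ m ≤ 2N} inf_{v ∈ V} ‖ψ̃_m − v‖_H = 1/√2. -/
noncomputable section
open Metric Module
local notation "⟪" x ", " y "⟫" => @inner ℝ _ _ x y

/-- In a real Hilbert space, the Kolmogorov N-width of any orthonormal
family of 2N vectors equals 1/√2. -/
theorem kolmogorov_nwidth_orthonormal_family {H : Type*}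
    [NormedAddCommGroup H] [InnerProductSpace ℝ H] [CompleteSpace H]
    (N : ℕ) (hN : 1 ≤ N) (ψ : Fin (2 * N) → H) (hψ : Orthonormal ℝ ψ) :
    (⨅ V : {V : Submodule ℝ H // finrank ℝ V = N},
      ⨆ m : Fin (2 * N), infDist (ψ m) (V.1 : Set H))
    = 1 / Real.sqrt 2 := by
  have h2N : 0 < 2 * N := by omega
  haveI : Nonempty (Fin (2 * N)) := ⟨⟨0, h2N⟩⟩
  have hsqrt2 : (0:ℝ) < Real.sqrt 2 := Real.sqrt_pos.mpr (by norm_num)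
  have hss : Real.sqrt 2 * Real.sqrt 2 = 2 := Real.mul_self_sqrt (by norm_num)
  have hψ' := orthonormal_iff_ite.mp hψ
  -- Lower bound for every N-dimensional subspace
  have lower : ∀ V : Submodule ℝ H, finrank ℝ V = N →
      1 / Real.sqrt 2 ≤ ⨆ m : Fin (2 * N), infDist (ψ m) (V : Set H) := by
    intro V hV
    haveI : FiniteDimensional ℝ V := FiniteDimensional.of_finrank_pos (by omega)
    let b := (stdOrthonormalBasis ℝ V).reindex (finCongr hV)
    set v : Fin N → H := fun j => (b j : H) with hvdef
    have hvon : Orthonormal ℝ v := by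
      rw [orthonormal_iff_ite]
      intro i j
      rw [hvdef]
      simp only [← Submodule.coe_inner]
      exact orthonormal_iff_ite.mp b.orthonormal i j
    set P : Fin (2 * N) → H := fun m => (V.orthogonalProjectionOnto (ψ m) : H) with hPdef
    have hPmem : ∀ m, P m ∈ V := fun m => (V.orthogonalProjectionOnto (ψ m)).2
    have hdist : ∀ m, infDist (ψ m) (V : Set H) = ‖ψ m - P m‖ := by
      intro m
      rw [Metric.infDist_eq_iInf, hPdef]
      rw [show ‖ψ m - (fun m => (V.orthogonalProjectionOnto (ψ m) : H)) m‖ = ‖ψ m - V.starProjection (ψ m)‖ from rfl, Submodule.starProjection_minimal]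
      simp only [dist_eq_norm]
      rfl
    have pyth : ∀ m, ‖ψ m - P m‖ ^ 2 = 1 - ‖P m‖ ^ 2 := by
      intro m
      have h0 : ⟪P m, ψ m - P m⟫ = 0 :=
        Submodule.inner_right_of_mem_orthogonal (hPmem m)
          (Submodule.sub_starProjection_mem_orthogonal (ψ m))
      have hn : ‖ψ m‖ = 1 := hψ.1 m
      have h1 : ‖P m + (ψ m - P m)‖ ^ 2 = ‖P m‖ ^ 2 + ‖ψ m - P m‖ ^ 2 := by
        rw [norm_add_sq_real, h0]; ring
      have h2 : P m + (ψ m - P m) = ψ m := by abel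
      rw [h2, hn] at h1
      linarith [h1]
    have hproj : ∀ m, ‖P m‖ ^ 2 = ∑ j, ⟪v j, ψ m⟫ ^ 2 := by
      intro m
      have hs := b.orthogonalProjectionOnto_apply_eq_sum (ψ m)
      have hPe : P m = ∑ j, ⟪v j, ψ m⟫ • v j := by
        rw [hPdef]
        simp only [hs, Submodule.coe_sum, Submodule.coe_smul]
        rfl
      rw [hPe, ← real_inner_self_eq_norm_sq, hvon.inner_sum]
      simp [sq]
    have bessel : ∑ m, ‖P m‖ ^ 2 ≤ (N : ℝ) := by
      have hswap : ∑ m, ‖P m‖ ^ 2 = ∑ j : Fin N, ∑ m, ⟪ψ m, v j⟫ ^ 2 := by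
        rw [Finset.sum_comm]
        simp only [hproj]
        congr 1; funext m; congr 1; funext j
        rw [real_inner_comm]
      rw [hswap]
      have : ∀ j : Fin N, ∑ m, ⟪ψ m, v j⟫ ^ 2 ≤ 1 := by
        intro j
        have hb := hψ.sum_inner_products_le (v j) (s := Finset.univ)
        have hbn : ‖v j‖ = 1 := hvon.1 j
        simp only [Real.norm_eq_abs, sq_abs] at hb
        rw [hbn] at hb
        simpa using hb
      calc ∑ j : Fin N, ∑ m, ⟪ψ m, v j⟫ ^ 2 ≤ ∑ _j : Fin N, (1:ℝ) :=
            Finset.sum_le_sum fun j _ => this j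
        _ = N := by simp
    have main : (N : ℝ) ≤ ∑ m, ‖ψ m - P m‖ ^ 2 := by
      have hsum : ∑ m, ‖ψ m - P m‖ ^ 2 = 2 * N - ∑ m, ‖P m‖ ^ 2 := by
        simp only [pyth, Finset.sum_sub_distrib, Finset.sum_const, Finset.card_univ,
          Fintype.card_fin, nsmul_eq_mul, mul_one]
        push_cast; ring
      linarith
    obtain ⟨m, hm⟩ : ∃ m, (1:ℝ) / 2 ≤ ‖ψ m - P m‖ ^ 2 := by
      by_contra hcon
      push_neg at hcon
      have hlt : ∑ m, ‖ψ m - P m‖ ^ 2 < ∑ _m : Fin (2 * N), (1:ℝ) / 2 :=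
        Finset.sum_lt_sum_of_nonempty Finset.univ_nonempty fun i _ => hcon i
      rw [Finset.sum_const, Finset.card_univ, Fintype.card_fin, nsmul_eq_mul] at hlt
      push_cast at hlt
      linarith
    have hm' : 1 / Real.sqrt 2 ≤ ‖ψ m - P m‖ := by
      have h0 : (0:ℝ) ≤ ‖ψ m - P m‖ := norm_nonneg _
      have hs2 : Real.sqrt (1 / 2) ≤ Real.sqrt (‖ψ m - P m‖ ^ 2) := Real.sqrt_le_sqrt hm
      rw [Real.sqrt_sq h0] at hs2
      have : Real.sqrt (1 / 2) = 1 / Real.sqrt 2 := by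
        rw [one_div, one_div, ← Real.sqrt_inv]
      linarith [hs2, this.symm.le]
    calc 1 / Real.sqrt 2 ≤ infDist (ψ m) (V : Set H) := by rw [hdist m]; exact hm'
      _ ≤ ⨆ m, infDist (ψ m) (V : Set H) :=
          le_ciSup (f := fun m : Fin (2 * N) => infDist (ψ m) (V : Set H))
            (Set.Finite.bddAbove (Set.finite_range _)) m
  -- Construction of an optimal subspace
  set A : Fin N → Fin (2 * N) := fun i => ⟨i.1, by have := i.2; omega⟩ with hA
  set B : Fin N → Fin (2 * N) := fun i => ⟨N + i.1, by have := i.2; omega⟩ with hB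
  set u : Fin N → H := fun i => ψ (A i) + ψ (B i) with hu
  set w : Fin N → H := fun i => (Real.sqrt 2)⁻¹ • u i with hw
  have hinneru : ∀ i j : Fin N, ⟪u i, u j⟫ = if i = j then 2 else 0 := by
    intro i j
    have hAAne : A i = A j ↔ i = j := by
      constructor
      · intro h; ext; simpa [hA, Fin.ext_iff] using h
      · rintro rfl; rfl
    have hBBne : B i = B j ↔ i = j := by
      constructor
      · intro h; ext; simp only [hB, Fin.ext_iff] at h; omega
      · rintro rfl; rfl
    have hABne : A i ≠ B j := by
      simp only [hA, hB, ne_eq, Fin.ext_iff]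
      have := i.2; omega
    have hBAne : B i ≠ A j := by
      simp only [hA, hB, ne_eq, Fin.ext_iff]
      have := j.2; omega
    simp only [hu, inner_add_left, inner_add_right, hψ']
    by_cases h : i = j
    · subst h
      simp [hABne, hBAne]
      norm_num
    · have h1 : A i ≠ A j := fun hc => h (hAAne.mp hc)
      have h2 : B i ≠ B j := fun hc => h (hBBne.mp hc)
      simp [h, h1, h2, hABne, hBAne]
  have hwon : Orthonormal ℝ w := by
    rw [orthonormal_iff_ite]
    intro i j
    rw [hw]
    simp only [real_inner_smul_left, real_inner_smul_right, hinneru]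
    by_cases h : i = j
    · subst h
      simp only [if_pos rfl]
      field_simp
      simp only [if_true, mul_one]; rw [sq, hss]
    · simp [h]
  set V₀ := Submodule.span ℝ (Set.range w) with hV₀def
  have hV₀ : finrank ℝ V₀ = N := by
    rw [hV₀def, finrank_span_eq_card hwon.linearIndependent, Fintype.card_fin]
  have hnormsub : ∀ a b : Fin (2 * N), a ≠ b → ‖ψ a - ψ b‖ = Real.sqrt 2 := by
    intro a b hab
    have h1 : ‖ψ a - ψ b‖ ^ 2 = 2 := by
      rw [norm_sub_sq_real, hψ.1 a, hψ.1 b, hψ' a b, if_neg hab]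
      ring
    rw [← Real.sqrt_sq (norm_nonneg (ψ a - ψ b)), h1]
  have hhalf : (2:ℝ)⁻¹ * Real.sqrt 2 = 1 / Real.sqrt 2 := by
    rw [eq_div_iff hsqrt2.ne', mul_assoc, hss]; norm_num
  have upper : (⨆ m : Fin (2 * N), infDist (ψ m) (V₀ : Set H)) ≤ 1 / Real.sqrt 2 := by
    apply ciSup_le
    intro m
    -- select the pair containing m
    have key : ∀ i : Fin N, ∀ x : Fin (2 * N), (x = A i ∨ x = B i) →
        infDist (ψ x) (V₀ : Set H) ≤ 1 / Real.sqrt 2 := by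
      intro i x hx
      have hmem : (2:ℝ)⁻¹ • u i ∈ V₀ := by
        have huw : u i = Real.sqrt 2 • w i := by
          rw [hw, smul_smul, mul_inv_cancel₀ hsqrt2.ne', one_smul]
        rw [huw, smul_smul]
        exact Submodule.smul_mem _ _ (Submodule.subset_span ⟨i, rfl⟩)
      have hd : dist (ψ x) ((2:ℝ)⁻¹ • u i) = 1 / Real.sqrt 2 := by
        rcases hx with rfl | rfl
        · have hne : A i ≠ B i := by
            simp only [hA, hB, ne_eq, Fin.ext_iff]; have := i.2; omega
          rw [dist_eq_norm]
          have : ψ (A i) - (2:ℝ)⁻¹ • u i = (2:ℝ)⁻¹ • (ψ (A i) - ψ (B i)) := by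
            rw [hu]; module
          rw [this, norm_smul, hnormsub _ _ hne]
          simp only [norm_inv, Real.norm_ofNat]
          exact hhalf
        · have hne : B i ≠ A i := by
            simp only [hA, hB, ne_eq, Fin.ext_iff]; have := i.2; omega
          rw [dist_eq_norm]
          have : ψ (B i) - (2:ℝ)⁻¹ • u i = (2:ℝ)⁻¹ • (ψ (B i) - ψ (A i)) := by
            rw [hu]; module
          rw [this, norm_smul, hnormsub _ _ hne]
          simp only [norm_inv, Real.norm_ofNat]
          exact hhalf
      calc infDist (ψ x) (V₀ : Set H) ≤ dist (ψ x) ((2:ℝ)⁻¹ • u i) :=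
            infDist_le_dist_of_mem hmem
        _ = 1 / Real.sqrt 2 := hd
    by_cases hmo : (m : ℕ) < N
    · exact key ⟨m.1, hmo⟩ m (Or.inl (by simp [hA]))
    · refine key ⟨m.1 - N, by have := m.2; omega⟩ m (Or.inr ?_)
      simp only [hB, Fin.ext_iff]
      omega
  haveI : Nonempty {V : Submodule ℝ H // finrank ℝ V = N} := ⟨⟨V₀, hV₀⟩⟩
  have hbdd : BddBelow (Set.range fun V : {V : Submodule ℝ H // finrank ℝ V = N} =>
      ⨆ m : Fin (2 * N), infDist (ψ m) (V.1 : Set H)) := by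
    refine ⟨0, ?_⟩
    rintro x ⟨V, rfl⟩
    exact Real.iSup_nonneg fun m => infDist_nonneg
  apply le_antisymm
  · exact (ciInf_le hbdd ⟨V₀, hV₀⟩).trans upper
  · exact le_ciInf fun V => lower V.1 V.2
end
end

section
/- Let M ≥ 1, N ≥ 1 be integers, and consider Φ_M = {φ_{m/M} : 0 ≤ m ≤ M} and Ψ_M = {ψ_{M,m} : 1 ≤ m ≤ M} in L²(Ω_I). Then the Kolmogorov N-widths satisfy d_N(Φ_M) ≥ (1/2)·d_N(Ψ_M). -/
noncomputable section
open MeasureTheory Set ENNReal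

/-- The space-time domain Ω_I = (0,1) × (−1,1). -/
def ΩI : Set (ℝ × ℝ) := Ioo (0:ℝ) 1 ×ˢ Ioo (-1:ℝ) 1

instance : Fact (volume ΩI < ∞) := by
  constructor
  rw [ΩI, Measure.volume_eq_prod, Measure.prod_prod, Real.volume_Ioo, Real.volume_Ioo]
  exact ENNReal.mul_lt_top ENNReal.ofReal_lt_top ENNReal.ofReal_lt_top

/-- Lebesgue measure restricted to Ω_I. -/
def volΩ : Measure (ℝ × ℝ) := volume.restrict ΩI

instance : IsFiniteMeasure volΩ := by
  rw [volΩ]; infer_instance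

/-- The parametrized solution φ_μ as a function on ℝ × ℝ. -/
def phiFun (μ : ℝ) : ℝ × ℝ → ℝ := fun p =>
  if p.2 < -μ * p.1 then 1 else if μ * p.1 ≤ p.2 then -1 else 0

lemma phiFun_measurable (μ : ℝ) : Measurable (phiFun μ) := by
  unfold phiFun
  refine Measurable.ite ?_ measurable_const (Measurable.ite ?_ measurable_const measurable_const)
  · exact measurableSet_lt measurable_snd (measurable_fst.const_mul (-μ))
  · exact measurableSet_le (measurable_fst.const_mul μ) measurable_snd

lemma phiFun_memℒp (μ : ℝ) : MemLp (phiFun μ) 2 volΩ := by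
  refine MemLp.of_bound (phiFun_measurable μ).aestronglyMeasurable 1 ?_
  refine Filter.Eventually.of_forall fun p => ?_
  unfold phiFun
  split_ifs <;> simp

/-- φ_μ as an element of L²(Ω_I). -/
def phiLp (μ : ℝ) : Lp ℝ 2 volΩ := (phiFun_memℒp μ).toLp (phiFun μ)

/-- ψ_{M,m} as a function on ℝ × ℝ. -/
def psiFun (M m : ℕ) : ℝ × ℝ → ℝ := fun p =>
  if (-((m:ℝ)/M) * p.1 ≤ p.2 ∧ p.2 < -(((m:ℝ)-1)/M) * p.1) then 1
  else if ((((m:ℝ)-1)/M) * p.1 ≤ p.2 ∧ p.2 < ((m:ℝ)/M) * p.1) then -1 else 0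

lemma psiFun_measurable (M m : ℕ) : Measurable (psiFun M m) := by
  unfold psiFun
  refine Measurable.ite ?_ measurable_const (Measurable.ite ?_ measurable_const measurable_const) <;>
  · exact MeasurableSet.inter
      (measurableSet_le (measurable_fst.const_mul _) measurable_snd)
      (measurableSet_lt measurable_snd (measurable_fst.const_mul _))

lemma psiFun_memℒp (M m : ℕ) : MemLp (psiFun M m) 2 volΩ := by
  refine MemLp.of_bound (psiFun_measurable M m).aestronglyMeasurable 1 ?_
  refine Filter.Eventually.of_forall fun p => ?_
  unfold psiFun
  split_ifs <;> simp

/-- ψ_{M,m} as an element of L²(Ω_I). -/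
def psiLp (M m : ℕ) : Lp ℝ 2 volΩ := (psiFun_memℒp M m).toLp (psiFun M m)

open Metric Module


/-- Pointwise case analysis underlying ψ = φ_a − φ_b. -/
lemma phi_psi_key (a b t x : ℝ) (ht : 0 ≤ t) (ha : 0 ≤ a) (hab : a < b) :
  (if (-b*t ≤ x ∧ x < -a*t) then (1:ℝ) else if (a*t ≤ x ∧ x < b*t) then -1 else 0)
  = (if x < -a*t then 1 else if a*t ≤ x then -1 else 0) - (if x < -b*t then 1 else if b*t ≤ x then -1 else 0) := by
  have h1 : -b*t ≤ -a*t := by nlinarith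
  have h2 : -a*t ≤ a*t := by nlinarith
  have h3 : a*t ≤ b*t := by nlinarith
  split_ifs with p1 p2 p3 p4 p5 p6 p7 p8 p9 p10 p11 p12
  all_goals try push_neg at *
  all_goals try obtain ⟨q1, q2⟩ := p1
  all_goals try obtain ⟨q3, q4⟩ := p10
  all_goals try linarith
  all_goals try norm_num
  all_goals try linarith [p1 (by linarith : -b*t ≤ x)]
  all_goals try linarith [p10 (by linarith : a*t ≤ x)]

lemma psi_ae_eq_phi_sub (M m : ℕ) (hM : 1 ≤ M) :
    psiFun M (m+1) =ᵐ[volΩ] phiFun ((m:ℝ)/M) - phiFun (((m:ℝ)+1)/M) := by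
  have hΩ : MeasurableSet ΩI := (measurableSet_Ioo).prod measurableSet_Ioo
  rw [volΩ]
  refine (ae_restrict_iff' hΩ).mpr (Filter.Eventually.of_forall fun p hp => ?_)
  have ht : 0 ≤ p.1 := le_of_lt hp.1.1
  have hM0 : (0:ℝ) < M := by exact_mod_cast hM
  have ha : 0 ≤ (m:ℝ)/M := div_nonneg (Nat.cast_nonneg m) hM0.le
  have hab : (m:ℝ)/M < ((m:ℝ)+1)/M := by
    rw [div_lt_div_iff₀ hM0 hM0]; nlinarith
  have hk := phi_psi_key ((m:ℝ)/M) (((m:ℝ)+1)/M) p.1 p.2 ht ha hab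
  have e1 : ((m+1:ℕ):ℝ) = (m:ℝ)+1 := by push_cast; ring
  have e2 : ((m+1:ℕ):ℝ) - 1 = (m:ℝ) := by push_cast; ring
  have e3 : (m:ℝ) + 1 - 1 = (m:ℝ) := by ring
  simp only [psiFun, phiFun, Pi.sub_apply, e1, e2, e3]
  exact hk

lemma psiLp_eq_phi_sub (M m : ℕ) (hM : 1 ≤ M) :
    psiLp M (m+1) = phiLp ((m:ℝ)/M) - phiLp (((m:ℝ)+1)/M) := by
  rw [psiLp, phiLp, phiLp, ← MemLp.toLp_sub]
  exact MemLp.toLp_congr _ _ (psi_ae_eq_phi_sub M m hM)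

lemma infDist_sub_le_submodule {E : Type*} [NormedAddCommGroup E] [NormedSpace ℝ E]
    (V : Submodule ℝ E) (x y : E) :
    Metric.infDist (x - y) (V : Set E) ≤ Metric.infDist x V + Metric.infDist y V := by
  have hne : (V : Set E).Nonempty := ⟨0, V.zero_mem⟩
  refine le_of_forall_pos_le_add fun ε hε => ?_
  obtain ⟨v, hv, hdv⟩ := (Metric.infDist_lt_iff hne).1
    (lt_add_of_pos_right _ (half_pos hε) : Metric.infDist x V < Metric.infDist x V + ε/2)
  obtain ⟨w, hw, hdw⟩ := (Metric.infDist_lt_iff hne).1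
    (lt_add_of_pos_right _ (half_pos hε) : Metric.infDist y V < Metric.infDist y V + ε/2)
  calc Metric.infDist (x - y) (V : Set E) ≤ dist (x - y) (v - w) :=
        Metric.infDist_le_dist_of_mem (V.sub_mem hv hw)
    _ ≤ dist x v + dist y w := dist_sub_sub_le _ _ _ _
    _ ≤ _ := by linarith

/-- For M, N ≥ 1 the Kolmogorov N-widths in L²(Ω_I) of
Φ_M = {φ_{m/M} : 0 ≤ m ≤ M} and Ψ_M = {ψ_{M,m} : 1 ≤ m ≤ M} satisfy
d_N(Φ_M) ≥ (1/2)·d_N(Ψ_M). -/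
theorem kolmogorov_nwidth_phi_ge_half_psi (M N : ℕ) (hM : 1 ≤ M) (hN : 1 ≤ N) :
    (1 / 2) * (⨅ V : {V : Submodule ℝ (Lp ℝ 2 volΩ) // finrank ℝ V = N},
        ⨆ m : Fin M, infDist (psiLp M (m.1 + 1)) (V.1 : Set (Lp ℝ 2 volΩ)))
      ≤ ⨅ V : {V : Submodule ℝ (Lp ℝ 2 volΩ) // finrank ℝ V = N},
        ⨆ m : Fin (M + 1), infDist (phiLp ((m.1 : ℝ) / M)) (V.1 : Set (Lp ℝ 2 volΩ)) := by
  haveI : Nonempty (Fin M) := ⟨⟨0, hM⟩⟩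
  rcases isEmpty_or_nonempty {V : Submodule ℝ (Lp ℝ 2 volΩ) // finrank ℝ V = N} with hemp | hne
  · rw [iInf, iInf, Set.range_eq_empty, Set.range_eq_empty, Real.sInf_empty]
    norm_num
  refine le_ciInf fun V => ?_
  have hψbdd : BddBelow (Set.range fun (W : {V : Submodule ℝ (Lp ℝ 2 volΩ) // finrank ℝ V = N}) =>
      ⨆ m : Fin M, infDist (psiLp M (m.1 + 1)) (W.1 : Set (Lp ℝ 2 volΩ))) := by
    refine ⟨0, ?_⟩
    rintro _ ⟨W, rfl⟩
    exact Real.iSup_nonneg fun m => infDist_nonneg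
  have h1 : (⨅ V : {V : Submodule ℝ (Lp ℝ 2 volΩ) // finrank ℝ V = N},
      ⨆ m : Fin M, infDist (psiLp M (m.1 + 1)) (V.1 : Set (Lp ℝ 2 volΩ)))
      ≤ ⨆ m : Fin M, infDist (psiLp M (m.1 + 1)) (V.1 : Set (Lp ℝ 2 volΩ)) :=
    ciInf_le hψbdd V
  set S := ⨆ m : Fin (M + 1), infDist (phiLp ((m.1 : ℝ) / M)) (V.1 : Set (Lp ℝ 2 volΩ)) with hS
  have hbdd : BddAbove (Set.range fun k : Fin (M + 1) =>
      infDist (phiLp ((k.1 : ℝ) / M)) (V.1 : Set (Lp ℝ 2 volΩ))) :=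
    Set.Finite.bddAbove (Set.finite_range _)
  have h2 : ∀ m : Fin M, infDist (psiLp M (m.1 + 1)) (V.1 : Set (Lp ℝ 2 volΩ)) ≤ 2 * S := by
    intro m
    rw [psiLp_eq_phi_sub M m.1 hM]
    have hA := infDist_sub_le_submodule V.1 (phiLp ((m.1 : ℝ) / M)) (phiLp (((m.1 : ℝ) + 1) / M))
    have hB : infDist (phiLp ((m.1 : ℝ) / M)) (V.1 : Set (Lp ℝ 2 volΩ)) ≤ S := by
      have := le_ciSup hbdd (⟨m.1, by omega⟩ : Fin (M + 1))
      simpa using this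
    have hC : infDist (phiLp (((m.1 : ℝ) + 1) / M)) (V.1 : Set (Lp ℝ 2 volΩ)) ≤ S := by
      have := le_ciSup hbdd (⟨m.1 + 1, by omega⟩ : Fin (M + 1))
      have e : ((m.1 + 1 : ℕ) : ℝ) = (m.1 : ℝ) + 1 := by push_cast; ring
      simpa [e] using this
    linarith
  have h3 : (⨆ m : Fin M, infDist (psiLp M (m.1 + 1)) (V.1 : Set (Lp ℝ 2 volΩ))) ≤ 2 * S :=
    ciSup_le h2
  linarith
end
end

section
/- Let N ≥ 1 and set M = 2N. Then the Kolmogorov N-width of the set Ψ_{2N} = {ψ_{2N,m} : 1 ≤ m ≤ 2N} in L²(Ω_I) equals 1/(2√N), i.e., inf over all N-dimensional linear subspaces V ⊆ L²(Ω_I) of max_{1 ≤ m ≤ 2N} inf_{v ∈ V} ‖ψ_{2N,m} − v‖_{L²(Ω_I)} = (1/√2)·(1/√(2N)) = 1/(2√N). -/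
noncomputable section
open MeasureTheory Set ENNReal

open Metric Module

open scoped RealInnerProductSpace

variable {E : Type*} [NormedAddCommGroup E] [InnerProductSpace ℝ E] [CompleteSpace E]

theorem width_orth (N : ℕ) (hN : 1 ≤ N) (v : Fin (2*N) → E) (r : ℝ) (hr : 0 < r)
    (ho : ∀ i j, ⟪v i, v j⟫ = if i = j then r^2 else 0) :
    (⨅ V : {V : Submodule ℝ E // finrank ℝ V = N},
        ⨆ m : Fin (2*N), infDist (v m) (V.1 : Set E)) = r / Real.sqrt 2 := by
  have h2 : (0:ℝ) < Real.sqrt 2 := Real.sqrt_pos.2 (by norm_num)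
  have hrs : (0:ℝ) < r / Real.sqrt 2 := div_pos hr h2
  -- pairwise distinct index helpers
  have ha : ∀ k : Fin N, 2*k.1 < 2*N := fun k => by omega
  have hb : ∀ k : Fin N, 2*k.1+1 < 2*N := fun k => by omega
  set a : Fin N → Fin (2*N) := fun k => ⟨2*k.1, ha k⟩ with ha'
  set b : Fin N → Fin (2*N) := fun k => ⟨2*k.1+1, hb k⟩ with hb'
  set w : Fin N → E := fun k => v (a k) + v (b k) with hw
  have hinnerw : ∀ k l, ⟪w k, w l⟫ = if k = l then 2*r^2 else 0 := by
    intro k l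
    simp only [hw, inner_add_left, inner_add_right, ho]
    have hab : ∀ k l : Fin N, a k ≠ b l := by
      intro k l h
      have := congrArg Fin.val h; simp [ha', hb'] at this; omega
    have haa : (a k = a l) ↔ k = l := by
      constructor
      · intro h; have := congrArg Fin.val h; simp [ha'] at this; exact Fin.ext (by omega)
      · rintro rfl; rfl
    have hbb : (b k = b l) ↔ k = l := by
      constructor
      · intro h; have := congrArg Fin.val h; simp [hb'] at this; exact Fin.ext (by omega)
      · rintro rfl; rfl
    have hba : ∀ k l : Fin N, b k ≠ a l := fun k l h => hab l k h.symm
    rw [if_neg (hab k l), if_neg (hba k l)]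
    by_cases hkl : k = l
    · subst hkl
      simp
      ring
    · have h1 : a k ≠ a l := fun h => hkl (haa.1 h)
      have h2' : b k ≠ b l := fun h => hkl (hbb.1 h)
      simp [h1, h2', hkl]
  have hc : Real.sqrt 2 * r ≠ 0 := by positivity
  set w' : Fin N → E := fun k => (Real.sqrt 2 * r)⁻¹ • w k with hw'
  have honw' : Orthonormal ℝ w' := by
    rw [orthonormal_iff_ite]
    intro k l
    simp only [hw', real_inner_smul_left, real_inner_smul_right, hinnerw]
    by_cases hkl : k = l
    · simp [hkl]
      field_simp
      rw [Real.sq_sqrt (by norm_num : (0:ℝ) ≤ 2)]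
    · simp [hkl]
  set V₀ : Submodule ℝ E := Submodule.span ℝ (Set.range w') with hV₀
  have hwmem : ∀ k, w k ∈ V₀ := by
    intro k
    have : w k = (Real.sqrt 2 * r) • w' k := by
      rw [hw', smul_smul, mul_inv_cancel₀ hc, one_smul]
    rw [this]
    exact Submodule.smul_mem _ _ (Submodule.subset_span ⟨k, rfl⟩)
  have hrank : finrank ℝ V₀ = N := by
    rw [hV₀, finrank_span_eq_card honw'.linearIndependent, Fintype.card_fin]
  -- distance bound for the upper estimate
  have hdist : ∀ i j : Fin (2*N), i ≠ j → ‖v i - (2:ℝ)⁻¹ • (v i + v j)‖ = r / Real.sqrt 2 := by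
    intro i j hij
    have h1 : v i - (2:ℝ)⁻¹ • (v i + v j) = (2:ℝ)⁻¹ • (v i - v j) := by
      rw [smul_sub, smul_add]
      module
    have h2' : ‖v i - v j‖^2 = 2*r^2 := by
      rw [← real_inner_self_eq_norm_sq, inner_sub_left, inner_sub_right, inner_sub_right, ho, ho,
        ho, ho, if_pos rfl, if_pos rfl, if_neg hij, if_neg (Ne.symm hij)]
      ring
    have h3 : ‖v i - v j‖ = Real.sqrt 2 * r := by
      have := congrArg Real.sqrt h2'
      rwa [Real.sqrt_sq (norm_nonneg _), Real.sqrt_mul (by norm_num), Real.sqrt_sq hr.le] at this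
    rw [h1, norm_smul, h3]
    rw [eq_div_iff h2.ne']
    simp only [norm_inv, Real.norm_ofNat]
    linear_combination (r/2) * Real.mul_self_sqrt (show (0:ℝ) ≤ 2 by norm_num)
  have hbddb : BddBelow (Set.range fun V : {V : Submodule ℝ E // finrank ℝ V = N} =>
      ⨆ m : Fin (2*N), infDist (v m) (V.1 : Set E)) := by
    refine ⟨0, ?_⟩
    rintro x ⟨V, rfl⟩
    exact Real.iSup_nonneg fun m => infDist_nonneg
  refine le_antisymm ?_ ?_
  · refine ciInf_le_of_le hbddb ⟨V₀, hrank⟩ ?_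
    refine Real.iSup_le (fun m => ?_) hrs.le
    -- m pairs with a k, b k where k = m/2
    have hk : m.1/2 < N := by omega
    set k : Fin N := ⟨m.1/2, hk⟩ with hkdef
    have hcase : (m = a k ∧ m ≠ b k) ∨ (m = b k ∧ m ≠ a k) := by
      have h1 := Nat.div_add_mod m.1 2
      rcases Nat.mod_two_eq_zero_or_one m.1 with h | h
      · left
        constructor
        · exact Fin.ext (by simp [ha', hkdef]; omega)
        · intro hcontra; have := congrArg Fin.val hcontra; simp [hb', hkdef] at this; omega
      · right
        constructor
        · exact Fin.ext (by simp [hb', hkdef]; omega)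
        · intro hcontra; have := congrArg Fin.val hcontra; simp [ha', hkdef] at this; omega
    have hmem : (2:ℝ)⁻¹ • w k ∈ V₀ := Submodule.smul_mem _ _ (hwmem k)
    have hwk : w k = v (a k) + v (b k) := rfl
    rcases hcase with ⟨hm, hm'⟩ | ⟨hm, hm'⟩
    · calc infDist (v m) (V₀ : Set E) ≤ dist (v m) ((2:ℝ)⁻¹ • w k) := infDist_le_dist_of_mem hmem
        _ = r / Real.sqrt 2 := by
            rw [dist_eq_norm, hwk]
            rw [hm] at hm' ⊢
            exact hdist _ _ hm'
    · calc infDist (v m) (V₀ : Set E) ≤ dist (v m) ((2:ℝ)⁻¹ • w k) := infDist_le_dist_of_mem hmem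
        _ = r / Real.sqrt 2 := by
            rw [dist_eq_norm, hwk]
            rw [hm] at hm' ⊢
            have hcomm : v (a k) + v (b k) = v (b k) + v (a k) := by abel
            rw [hcomm]
            exact hdist _ _ hm'
  · have hne : Nonempty {V : Submodule ℝ E // finrank ℝ V = N} := ⟨⟨V₀, hrank⟩⟩
    refine le_ciInf ?_
    rintro ⟨V, hV⟩
    haveI : FiniteDimensional ℝ V := FiniteDimensional.of_finrank_pos (by omega)
    haveI : CompleteSpace V := FiniteDimensional.complete ℝ V
    -- orthonormal basis of V
    set u : OrthonormalBasis (Fin N) ℝ V := (stdOrthonormalBasis ℝ V).reindex (finCongr hV) with hu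
    set P : Fin (2*N) → E := fun m => (V.orthogonalProjectionOnto (v m) : E) with hP
    have hpyth : ∀ m, ‖v m - P m‖^2 = r^2 - ‖P m‖^2 := by
      intro m
      have horth : ⟪v m - P m, P m⟫ = 0 :=
        Submodule.starProjection_inner_eq_zero (K := V) (v m) _ (V.orthogonalProjectionOnto (v m)).2
      have hsum : v m = (v m - P m) + P m := by abel
      have hnorm : ‖v m‖^2 = r^2 := by
        rw [← real_inner_self_eq_norm_sq, ho]; simp
      have := norm_add_sq_real (v m - P m) (P m)
      rw [← hsum, horth] at this
      rw [hnorm] at this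
      linarith
    have hproj_inner : ∀ m (i : Fin N), ⟪P m, (u i : E)⟫ = ⟪v m, (u i : E)⟫ := by
      intro m i
      have horth : ⟪v m - P m, (u i : E)⟫ = 0 :=
        Submodule.starProjection_inner_eq_zero (K := V) (v m) _ (u i).2
      rw [inner_sub_left] at horth
      linarith
    have hparseval : ∀ m, ‖P m‖^2 = ∑ i : Fin N, ⟪v m, (u i : E)⟫^2 := by
      intro m
      have := u.sum_inner_mul_inner (V.orthogonalProjectionOnto (v m)) (V.orthogonalProjectionOnto (v m))
      rw [real_inner_self_eq_norm_sq] at this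
      have hcoe : ∀ i, ⟪V.orthogonalProjectionOnto (v m), u i⟫ = ⟪P m, (u i : E)⟫ := fun i => rfl
      have hcoe2 : ∀ i, ⟪u i, V.orthogonalProjectionOnto (v m)⟫ = ⟪(u i : E), P m⟫ := fun i => rfl
      have hnc : ‖V.orthogonalProjectionOnto (v m)‖ = ‖P m‖ := rfl
      rw [hnc] at this
      rw [← this]
      refine Finset.sum_congr rfl fun i _ => ?_
      rw [hcoe, hcoe2, real_inner_comm ((u i : E)) (P m)]
      have h' : ⟪(u i : E), P m⟫ = ⟪v m, (u i : E)⟫ := by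
        rw [real_inner_comm]; exact hproj_inner m i
      rw [h']
      ring
    -- Bessel
    set e : Fin (2*N) → E := fun m => r⁻¹ • v m with he
    have hone : Orthonormal ℝ e := by
      rw [orthonormal_iff_ite]
      intro i j
      simp only [he, real_inner_smul_left, real_inner_smul_right, ho]
      by_cases hij : i = j
      · simp [hij]; field_simp
      · simp [hij]
    have hbessel : ∀ i : Fin N, ∑ m : Fin (2*N), ⟪v m, (u i : E)⟫^2 ≤ r^2 := by
      intro i
      have hb := hone.sum_inner_products_le (s := Finset.univ) ((u i : E))
      have hu1 : ‖(u i : E)‖ = 1 := u.orthonormal.1 i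
      rw [hu1] at hb
      have hre : ∀ m, ⟪v m, (u i : E)⟫^2 = r^2 * ‖⟪e m, (u i : E)⟫‖^2 := by
        intro m
        rw [he]
        simp only [real_inner_smul_left]
        rw [norm_mul, mul_pow, Real.norm_eq_abs, Real.norm_eq_abs, sq_abs, sq_abs]
        field_simp
      calc ∑ m : Fin (2*N), ⟪v m, (u i : E)⟫^2
          = r^2 * ∑ m : Fin (2*N), ‖⟪e m, (u i : E)⟫‖^2 := by
            rw [Finset.mul_sum]; exact Finset.sum_congr rfl fun m _ => hre m
        _ ≤ r^2 * 1^2 := by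
            refine mul_le_mul_of_nonneg_left ?_ (sq_nonneg r)
            simpa using hb
        _ = r^2 := by ring
    have hsumproj : ∑ m : Fin (2*N), ‖P m‖^2 ≤ N * r^2 := by
      calc ∑ m : Fin (2*N), ‖P m‖^2 = ∑ m : Fin (2*N), ∑ i : Fin N, ⟪v m, (u i : E)⟫^2 :=
            Finset.sum_congr rfl fun m _ => hparseval m
        _ = ∑ i : Fin N, ∑ m : Fin (2*N), ⟪v m, (u i : E)⟫^2 := Finset.sum_comm
        _ ≤ ∑ i : Fin N, r^2 := Finset.sum_le_sum fun i _ => hbessel i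
        _ = N * r^2 := by simp [Finset.sum_const]
    have hsumdist : (N:ℝ) * r^2 ≤ ∑ m : Fin (2*N), ‖v m - P m‖^2 := by
      have : ∑ m : Fin (2*N), ‖v m - P m‖^2
          = 2*N*r^2 - ∑ m : Fin (2*N), ‖P m‖^2 := by
        rw [eq_sub_iff_add_eq, ← Finset.sum_add_distrib]
        have : ∀ m : Fin (2*N), ‖v m - P m‖^2 + ‖P m‖^2 = r^2 := by
          intro m; have := hpyth m; linarith
        rw [Finset.sum_congr rfl fun m _ => this m]
        rw [Finset.sum_const, Finset.card_univ, Fintype.card_fin, nsmul_eq_mul]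
        push_cast
        ring
      rw [this]
      linarith
    -- extract an index with large distance
    have hexists : ∃ m : Fin (2*N), r^2/2 ≤ ‖v m - P m‖^2 := by
      by_contra hcon
      push_neg at hcon
      have : ∑ m : Fin (2*N), ‖v m - P m‖^2 < ∑ m : Fin (2*N), (r^2/2) := by
        refine Finset.sum_lt_sum_of_nonempty ?_ fun m _ => hcon m
        simp [Finset.univ_nonempty_iff]
        exact Fin.pos_iff_nonempty.mp (by omega)
      rw [Finset.sum_const, Finset.card_univ, Fintype.card_fin, nsmul_eq_mul] at this
      push_cast at this
      nlinarith
    obtain ⟨m, hm⟩ := hexists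
    have hlow : r / Real.sqrt 2 ≤ ‖v m - P m‖ := by
      have h1 : (r / Real.sqrt 2)^2 = r^2/2 := by
        rw [div_pow, Real.sq_sqrt (by norm_num)]
      have := Real.sqrt_le_sqrt (h1 ▸ hm)
      rwa [Real.sqrt_sq hrs.le, Real.sqrt_sq (norm_nonneg _)] at this
    have hinf : infDist (v m) (V : Set E) = ‖v m - P m‖ := by
      have hne' : (V : Set E).Nonempty := ⟨0, V.zero_mem⟩
      rw [infDist_eq_iInf]
      rw [show ‖v m - P m‖ = ‖v m - V.starProjection (v m)‖ from rfl, Submodule.starProjection_minimal (v m)]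
      congr 1
      ext y
      rw [dist_eq_norm]
    calc r / Real.sqrt 2 ≤ ‖v m - P m‖ := hlow
      _ = infDist (v m) (V : Set E) := hinf.symm
      _ ≤ ⨆ m' : Fin (2*N), infDist (v m') (V : Set E) :=
          le_ciSup (f := fun m' : Fin (2*N) => infDist (v m') (V : Set E))
            (Set.Finite.bddAbove (Set.finite_range _)) m

open scoped RealInnerProductSpace

-- pointwise disjointness of supports
lemma psiFun_mul_eq_zero_of_lt {M m m' : ℕ} (hM : 0 < M) (hm : 1 ≤ m) (hmm : m < m') :
    ∀ p : ℝ × ℝ, psiFun M m p * psiFun M m' p = 0 := by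
  intro p
  obtain ⟨t, x⟩ := p
  have hc : (0:ℝ) < M := by exact_mod_cast hM
  have hm1 : (1:ℝ) ≤ m := by exact_mod_cast hm
  have hmm' : (m:ℝ) + 1 ≤ m' := by exact_mod_cast hmm
  unfold psiFun
  simp only
  split_ifs with h1 h2 h3 h4 h5 h6 <;> try ring
  all_goals exfalso
  · -- (1,1): h1 : c1(m), h2 : c1(m')
    have e1 : ((m:ℝ)/M)*t - (((m:ℝ)-1)/M)*t = t/M := by ring
    have ht0 : 0 < t/M := by linarith [h1.1, h1.2]
    have ht : 0 < t := by
      have := mul_pos ht0 hc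
      rwa [div_mul_cancel₀ _ hc.ne'] at this
    have key : (m:ℝ)/M ≤ ((m':ℝ)-1)/M := by gcongr; linarith
    have hmul := mul_le_mul_of_nonneg_right key ht.le
    linarith [h1.1, h2.2, hmul]
  · -- (1,-1): h1 : c1(m), h3 : c2(m')
    have e1 : ((m:ℝ)/M)*t - (((m:ℝ)-1)/M)*t = t/M := by ring
    have ht0 : 0 < t/M := by linarith [h1.1, h1.2]
    have ht : 0 < t := by
      have := mul_pos ht0 hc
      rwa [div_mul_cancel₀ _ hc.ne'] at this
    have k1 : 0 ≤ ((m:ℝ)-1)/M * t := mul_nonneg (div_nonneg (by linarith) hc.le) ht.le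
    have k2 : 0 ≤ ((m':ℝ)-1)/M * t := mul_nonneg (div_nonneg (by linarith) hc.le) ht.le
    linarith [h1.2, h3.1, k1, k2]
  · -- (-1,1): h4 : c2(m), h5 : c1(m')
    have e1 : ((m:ℝ)/M)*t - (((m:ℝ)-1)/M)*t = t/M := by ring
    have ht0 : 0 < t/M := by linarith [h4.1, h4.2]
    have ht : 0 < t := by
      have := mul_pos ht0 hc
      rwa [div_mul_cancel₀ _ hc.ne'] at this
    have k1 : 0 ≤ ((m:ℝ)-1)/M * t := mul_nonneg (div_nonneg (by linarith) hc.le) ht.le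
    have k2 : 0 ≤ ((m':ℝ)-1)/M * t := mul_nonneg (div_nonneg (by linarith) hc.le) ht.le
    linarith [h4.1, h5.2, k1, k2]
  · -- (-1,-1): h4 : c2(m), h6 : c2(m')
    have e1 : ((m:ℝ)/M)*t - (((m:ℝ)-1)/M)*t = t/M := by ring
    have ht0 : 0 < t/M := by linarith [h4.1, h4.2]
    have ht : 0 < t := by
      have := mul_pos ht0 hc
      rwa [div_mul_cancel₀ _ hc.ne'] at this
    have key : (m:ℝ)/M ≤ ((m':ℝ)-1)/M := by gcongr; linarith
    have hmul := mul_le_mul_of_nonneg_right key ht.le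
    linarith [h4.2, h6.1, hmul]

lemma psiFun_mul_eq_zero {M m m' : ℕ} (hM : 0 < M) (hm : 1 ≤ m) (hm' : 1 ≤ m') (h : m ≠ m') :
    ∀ p, psiFun M m p * psiFun M m' p = 0 := by
  rcases lt_or_gt_of_ne h with hlt | hgt
  · exact psiFun_mul_eq_zero_of_lt hM hm hlt
  · intro p; rw [mul_comm]; exact psiFun_mul_eq_zero_of_lt hM hm' hgt p

lemma inner_psiLp (M m m' : ℕ) :
    ⟪psiLp M m, psiLp M m'⟫ = ∫ p, psiFun M m p * psiFun M m' p ∂volΩ := by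
  rw [MeasureTheory.L2.inner_def]
  refine integral_congr_ae ?_
  filter_upwards [MemLp.coeFn_toLp (psiFun_memℒp M m),
    MemLp.coeFn_toLp (psiFun_memℒp M m')] with p hp hp'
  rw [psiLp, psiLp] at *
  rw [hp, hp']
  simp [mul_comm]

lemma inner_psiLp_zero {M m m' : ℕ} (hM : 0 < M) (hm : 1 ≤ m) (hm' : 1 ≤ m') (h : m ≠ m') :
    ⟪psiLp M m, psiLp M m'⟫ = 0 := by
  rw [inner_psiLp]
  have hfz : (fun p => psiFun M m p * psiFun M m' p) = fun _ => (0:ℝ) :=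
    funext (psiFun_mul_eq_zero hM hm hm' h)
  rw [hfz]
  exact integral_zero _ _

def psiSet (M m : ℕ) : Set (ℝ × ℝ) :=
  {p | (-((m:ℝ)/M) * p.1 ≤ p.2 ∧ p.2 < -(((m:ℝ)-1)/M) * p.1) ∨
       ((((m:ℝ)-1)/M) * p.1 ≤ p.2 ∧ p.2 < ((m:ℝ)/M) * p.1)}

lemma psiSet_measurable (M m : ℕ) : MeasurableSet (psiSet M m) := by
  unfold psiSet
  refine MeasurableSet.union ?_ ?_ <;>
  · exact MeasurableSet.inter
      (measurableSet_le (measurable_fst.const_mul _) measurable_snd)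
      (measurableSet_lt measurable_snd (measurable_fst.const_mul _))

lemma psiFun_sq_eq_indicator (M m : ℕ) :
    ∀ p, psiFun M m p * psiFun M m p = (psiSet M m).indicator (fun _ => (1:ℝ)) p := by
  intro p
  classical
  rw [Set.indicator_apply]
  unfold psiFun psiSet
  simp only [mem_setOf_eq]
  split_ifs <;> try norm_num
  all_goals tauto

lemma volΩ_psiSet (M m : ℕ) (hM : 0 < M) (hm : 1 ≤ m) (hmM : m ≤ M) :
    volΩ (psiSet M m) = ENNReal.ofReal (1/M) := by
  have hc : (0:ℝ) < M := by exact_mod_cast hM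
  have hm1 : (1:ℝ) ≤ m := by exact_mod_cast hm
  have hmM' : (m:ℝ) ≤ M := by exact_mod_cast hmM
  have hq : (m:ℝ)/M ≤ 1 := (div_le_one hc).2 hmM'
  have hq0 : 0 ≤ ((m:ℝ)-1)/M := div_nonneg (by linarith) hc.le
  rw [volΩ, Measure.restrict_apply (psiSet_measurable M m)]
  have hInter : psiSet M m ∩ ΩI = (Ioo (0:ℝ) 1 ×ˢ (univ : Set ℝ)) ∩ psiSet M m := by
    ext p
    simp only [ΩI, mem_inter_iff, mem_prod, mem_univ, and_true]
    constructor
    · rintro ⟨hS, ht, hx⟩; exact ⟨ht, hS⟩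
    · rintro ⟨ht, hS⟩
      refine ⟨hS, ht, ?_⟩
      have h1t : (m:ℝ)/M * p.1 ≤ 1 * p.1 := mul_le_mul_of_nonneg_right hq ht.1.le
      have h0t : 0 ≤ ((m:ℝ)-1)/M * p.1 := mul_nonneg hq0 ht.1.le
      rcases hS with ⟨ha, hb⟩ | ⟨ha, hb⟩
      · constructor
        · have := ht.2; simp only [mem_Ioo] at ht ⊢; nlinarith
        · simp only [mem_Ioo] at ht ⊢; nlinarith
      · constructor
        · simp only [mem_Ioo] at ht ⊢; nlinarith
        · simp only [mem_Ioo] at ht ⊢; nlinarith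
  rw [hInter, Measure.volume_eq_prod,
    Measure.prod_apply ((measurableSet_Ioo.prod MeasurableSet.univ).inter (psiSet_measurable M m))]
  have hslice : (fun t => volume (Prod.mk t ⁻¹' ((Ioo (0:ℝ) 1 ×ˢ (univ : Set ℝ)) ∩ psiSet M m)))
      = (Ioo (0:ℝ) 1).indicator (fun t => ENNReal.ofReal (2*t/M)) := by
    classical
    funext t
    rw [Set.indicator_apply]
    by_cases ht : t ∈ Ioo (0:ℝ) 1
    · rw [if_pos ht]
      have hpre : Prod.mk t ⁻¹' ((Ioo (0:ℝ) 1 ×ˢ (univ : Set ℝ)) ∩ psiSet M m)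
          = Ico (-((m:ℝ)/M) * t) (-(((m:ℝ)-1)/M) * t) ∪ Ico ((((m:ℝ)-1)/M) * t) (((m:ℝ)/M) * t) := by
        ext x
        simp only [mem_preimage, mem_inter_iff, mem_prod, mem_univ, and_true, mem_union, mem_Ico]
        unfold psiSet
        simp only [mem_setOf_eq]
        tauto
      rw [hpre]
      have h0t : 0 ≤ ((m:ℝ)-1)/M * t := mul_nonneg hq0 ht.1.le
      have hdisj : Disjoint (Ico (-((m:ℝ)/M) * t) (-(((m:ℝ)-1)/M) * t))
          (Ico ((((m:ℝ)-1)/M) * t) (((m:ℝ)/M) * t)) := by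
        rw [Set.disjoint_left]
        intro x hx1 hx2
        simp only [mem_Ico] at hx1 hx2
        have := hx1.2; have := hx2.1
        nlinarith [hx1.2, hx2.1]
      rw [measure_union hdisj measurableSet_Ico, Real.volume_Ico, Real.volume_Ico]
      have e1 : -(((m:ℝ)-1)/M)*t - (-((m:ℝ)/M)*t) = t/M := by ring
      have e2 : ((m:ℝ)/M)*t - (((m:ℝ)-1)/M)*t = t/M := by ring
      rw [e1, e2, ← ENNReal.ofReal_add (div_nonneg ht.1.le hc.le) (div_nonneg ht.1.le hc.le)]
      congr 1
      ring
    · rw [if_neg ht]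
      have hpre : Prod.mk t ⁻¹' ((Ioo (0:ℝ) 1 ×ˢ (univ : Set ℝ)) ∩ psiSet M m) = ∅ := by
        ext x
        simp only [mem_preimage, mem_inter_iff, mem_prod, mem_univ, and_true, mem_empty_iff_false,
          iff_false]
        intro hcon
        exact ht hcon.1
      rw [hpre, measure_empty]
  rw [hslice, lintegral_indicator measurableSet_Ioo]
  have hint : IntegrableOn (fun t : ℝ => 2*t/M) (Ioo (0:ℝ) 1) := by
    have hcont : Continuous (fun t : ℝ => 2*t/M) := by continuity
    exact (hcont.integrableOn_Icc).mono_set Ioo_subset_Icc_self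
  have hnn : 0 ≤ᵐ[volume.restrict (Ioo (0:ℝ) 1)] (fun t : ℝ => 2*t/M) := by
    refine (ae_restrict_iff' measurableSet_Ioo).2 (Filter.Eventually.of_forall fun t ht => ?_)
    have : 0 < t := ht.1
    positivity
  rw [← MeasureTheory.ofReal_integral_eq_lintegral_ofReal hint hnn]
  congr 1
  rw [← integral_Ioc_eq_integral_Ioo, ← intervalIntegral.integral_of_le (by norm_num : (0:ℝ) ≤ 1)]
  have : ∀ x : ℝ, 2*x/M = (2/(M:ℝ))*x := fun x => by ring
  simp_rw [this]
  rw [intervalIntegral.integral_const_mul, integral_id]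
  field_simp
  ring

lemma inner_psiLp_self (M m : ℕ) (hM : 0 < M) (hm : 1 ≤ m) (hmM : m ≤ M) :
    ⟪psiLp M m, psiLp M m⟫ = 1/M := by
  rw [inner_psiLp]
  have hf : (fun p => psiFun M m p * psiFun M m p)
      = (psiSet M m).indicator (fun _ => (1:ℝ)) := funext (psiFun_sq_eq_indicator M m)
  rw [hf, integral_indicator_const (1:ℝ) (psiSet_measurable M m),
    measureReal_def, volΩ_psiSet M m hM hm hmM, smul_eq_mul, mul_one, ENNReal.toReal_ofReal]
  positivity


/-- For N ≥ 1, the Kolmogorov N-width in L²(Ω_I) of the set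
Ψ_{2N} = {ψ_{2N,m} : 1 ≤ m ≤ 2N} equals 1/(2√N). -/
theorem kolmogorov_nwidth_psi (N : ℕ) (hN : 1 ≤ N) :
    (⨅ V : {V : Submodule ℝ (Lp ℝ 2 volΩ) // finrank ℝ V = N},
        ⨆ m : Fin (2 * N), infDist (psiLp (2 * N) (m.1 + 1)) (V.1 : Set (Lp ℝ 2 volΩ)))
      = 1 / (2 * Real.sqrt N) := by
  have hN' : (0:ℝ) < N := by exact_mod_cast hN
  have h2N : (0:ℝ) < 2*(N:ℝ) := by linarith
  set r : ℝ := 1 / Real.sqrt (2*(N:ℝ)) with hrdef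
  have hs2N : 0 < Real.sqrt (2*(N:ℝ)) := Real.sqrt_pos.2 h2N
  have hr : 0 < r := by positivity
  have hr2 : r^2 = 1/(2*(N:ℝ)) := by
    rw [hrdef, div_pow, one_pow, Real.sq_sqrt h2N.le]
  have ho : ∀ i j : Fin (2*N),
      ⟪psiLp (2*N) (i.1+1), psiLp (2*N) (j.1+1)⟫ = if i = j then r^2 else 0 := by
    intro i j
    by_cases hij : i = j
    · subst hij
      rw [if_pos rfl, inner_psiLp_self (2*N) (i.1+1) (by omega) (by omega) (by omega), hr2]
      push_cast
      ring
    · rw [if_neg hij]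
      refine inner_psiLp_zero (by omega) (by omega) (by omega) ?_
      intro h
      exact hij (Fin.ext (by omega))
  have hw := width_orth N hN (fun m : Fin (2*N) => psiLp (2*N) (m.1+1)) r hr ho
  have halg : r / Real.sqrt 2 = 1 / (2 * Real.sqrt N) := by
    have e : Real.sqrt 2 * Real.sqrt (2*(N:ℝ)) = 2 * Real.sqrt N := by
      rw [← Real.sqrt_mul (by norm_num) (2*(N:ℝ))]
      rw [show (2:ℝ)*(2*(N:ℝ)) = 4*(N:ℝ) by ring]
      rw [Real.sqrt_mul (by norm_num) (N:ℝ)]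
      congr 1
      rw [show (4:ℝ) = 2^2 by norm_num, Real.sqrt_sq (by norm_num : (0:ℝ) ≤ 2)]
    rw [hrdef, div_div, one_div, one_div, mul_comm (Real.sqrt (2*(N:ℝ))) (Real.sqrt 2), e]
  exact hw.trans halg
end
end
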